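/- Let F ≡ Q₁x₁. Q₂x₂. … Qₙxₙ. E(x₁,…,xₙ) be a closed quantified Boolean formula in prenex form, where each Qᵢ ∈ {∀,∃} and E is a Boolean combination of the variables x₁,…,xₙ. Let φ be the PTLTL^FO formula Q₁x₁:p₁. Q₂x₂:p₂. … Qₙxₙ:pₙ. E(true(x₁),…,true(xₙ)) (E with the same Boolean connectives, each variable xᵢ replaced by the atom true(xᵢ)), where p₁,…,pₙ are distinct unary uninterpreted predicates and true is a further unary uninterpreted predicate, and let h be the history consisting of the single session {p₁(0), p₁(1), p₂(0), p₂(1), …, pₙ(0), pₙ(1), true(1)} over constants 0 and 1. Then F evaluates to true (under the standard Boolean semantics of QBF) if and only if h ⊨ φ. -/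

import Mathlib

/-- Terms: variables, constants, and applications of interpreted function symbols
(function symbols are named by natural numbers). -/
inductive Tm (C : Type) : Type where
  | var : ℕ → Tm C
  | const : C → Tm C
  | func : ℕ → List (Tm C) → Tm C

/-- Evaluation of a term under an interpretation `F` of the function symbols and an
environment (variable assignment) `ρ`. -/
def Tm.eval {C : Type} (F : ℕ → List C → C) (ρ : ℕ → C) : Tm C → C
  | .var x => ρ x
  | .const c => c
  | .func f args => F f (args.attach.map fun t => Tm.eval F ρ t.1)
  decreasing_by simp_wf; have := List.sizeOf_lt_of_mem t.2; omega

/-- Variables occurring in a term. -/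
def Tm.fv {C : Type} : Tm C → List ℕ
  | .var x => [x]
  | .const _ => []
  | .func _ args => args.attach.flatMap fun t => Tm.fv t.1
  decreasing_by simp_wf; have := List.sizeOf_lt_of_mem t.2; omega

/-- PTLTL^FO formulas: uninterpreted predicate atoms, interpreted relation atoms,
conjunction, negation, "previous" X⁻¹, "since" S, and the guarded universal
quantifier `all xs p ψ` (∀(x₁,…,xₙ):p. ψ). -/
inductive Fm (C : Type) : Type where
  | atom : ℕ → List (Tm C) → Fm C
  | rel : ℕ → List (Tm C) → Fm C
  | and : Fm C → Fm C → Fm C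
  | not : Fm C → Fm C
  | prev : Fm C → Fm C
  | since : Fm C → Fm C → Fm C
  | all : List ℕ → ℕ → Fm C → Fm C

/-- Free variables of a formula. -/
def Fm.fv {C : Type} : Fm C → List ℕ
  | .atom _ ts => ts.flatMap Tm.fv
  | .rel _ ts => ts.flatMap Tm.fv
  | .and a b => a.fv ++ b.fv
  | .not a => a.fv
  | .prev a => a.fv
  | .since a b => a.fv ++ b.fv
  | .all xs _ a => a.fv.filter (fun v => v ∉ xs)

/-- A formula is closed if it has no free variables. -/
def Fm.Closed {C : Type} (φ : Fm C) : Prop := φ.fv = []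

/-- A session is a finite set of events `p(c₁,…,cₙ)`. -/
abbrev Session (C : Type) := Finset (ℕ × List C)

/-- A history is a (finite) list of sessions. -/
abbrev History (C : Type) := List (Session C)

/-- Update an environment on the list of variables `xs` with the list of values `cs`. -/
def updEnv {C : Type} (ρ : ℕ → C) (xs : List ℕ) (cs : List C) : ℕ → C :=
  fun v => ((xs.zip cs).lookup v).getD (ρ v)

/-- The forcing relation `(h,i) ⊨ φ` (1-based session index `i`, environment `ρ`),
with interpretation `F` of function symbols and `R` of relation symbols. -/
def Sat {C : Type} (F : ℕ → List C → C) (R : ℕ → List C → Bool) (h : History C) :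
    ℕ → (ℕ → C) → Fm C → Prop
  | i, ρ, .atom p ts => (p, ts.map (Tm.eval F ρ)) ∈ h.getD (i - 1) ∅
  | i, ρ, .rel r ts => R r (ts.map (Tm.eval F ρ)) = true
  | i, ρ, .and a b => Sat F R h i ρ a ∧ Sat F R h i ρ b
  | i, ρ, .not a => ¬ Sat F R h i ρ a
  | i, ρ, .prev a => 1 < i ∧ Sat F R h (i - 1) ρ a
  | i, ρ, .since a b =>
      ∃ j, 1 ≤ j ∧ j ≤ i ∧ Sat F R h j ρ b ∧ ∀ k, j < k → k ≤ i → Sat F R h k ρ a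
  | i, ρ, .all xs p a =>
      ∀ cs : List C, cs.length = xs.length → (p, cs) ∈ h.getD (i - 1) ∅ →
        Sat F R h i (updEnv ρ xs cs) a

/-- Boolean expressions over variables (named by natural numbers). -/
inductive BExpr : Type where
  | var : ℕ → BExpr
  | and : BExpr → BExpr → BExpr
  | or : BExpr → BExpr → BExpr
  | not : BExpr → BExpr

/-- Evaluation of a Boolean expression under an assignment. -/
def BExpr.eval (v : ℕ → Bool) : BExpr → Bool
  | .var x => v x
  | .and a b => a.eval v && b.eval v
  | .or a b => a.eval v || b.eval v
  | .not a => !(a.eval v)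

/-- Variables of a Boolean expression. -/
def BExpr.vars : BExpr → List ℕ
  | .var x => [x]
  | .and a b => a.vars ++ b.vars
  | .or a b => a.vars ++ b.vars
  | .not a => a.vars

/-- Standard QBF semantics of the prenex formula `Q₁x_k. Q₂x_{k+1}. … E`;
the quantifier prefix is given as a list of Booleans (`true` = ∀, `false` = ∃), and
the variable quantified at position `j` of the prefix is `x_{k+j}`. -/
def QbfTrue (v : ℕ → Bool) : ℕ → List Bool → BExpr → Prop
  | _, [], E => E.eval v = true
  | k, q :: qs, E =>
      if q then ∀ b : Bool, QbfTrue (fun m => if m = k then b else v m) (k + 1) qs E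
      else ∃ b : Bool, QbfTrue (fun m => if m = k then b else v m) (k + 1) qs E

/-- Translation of the matrix: each variable `xᵢ` is replaced by the atom `true(xᵢ)`
(the predicate `true` is predicate symbol `0`); disjunction is the derived connective. -/
def trE : BExpr → Fm ℕ
  | .var x => .atom 0 [.var x]
  | .and a b => .and (trE a) (trE b)
  | .or a b => .not (.and (.not (trE a)) (.not (trE b)))
  | .not a => .not (trE a)

/-- Translation of the prefix: `Qᵢxᵢ` becomes the guarded quantifier `Qᵢ xᵢ : pᵢ`
(predicate `pᵢ` is predicate symbol `i`), with `∃x:p.ψ := ¬∀x:p.¬ψ`. -/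
def trQ : ℕ → List Bool → BExpr → Fm ℕ
  | _, [], E => trE E
  | k, q :: qs, E =>
      if q then .all [k] k (trQ (k + 1) qs E)
      else .not (.all [k] k (.not (trQ (k + 1) qs E)))

/-- The single session `{p₁(0), p₁(1), …, pₙ(0), pₙ(1), true(1)}`. -/
def qbfSession (n : ℕ) : Session ℕ :=
  ((Finset.Icc 1 n) ×ˢ ({[0], [1]} : Finset (List ℕ))) ∪ {(0, [1])}

/-- For a closed prenex QBF `F ≡ Q₁x₁.…Qₙxₙ.E(x₁,…,xₙ)`, with `φ` the
PTLTL^FO formula `Q₁x₁:p₁.…Qₙxₙ:pₙ. E(true(x₁),…,true(xₙ))` and `h` the one-session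
history `{p₁(0), p₁(1), …, pₙ(0), pₙ(1), true(1)}`: `F` is true iff `h ⊨ φ`. -/
lemma mem_qbfSession (n p : ℕ) (cs : List ℕ) :
    (p, cs) ∈ qbfSession n ↔
      (1 ≤ p ∧ p ≤ n ∧ (cs = [0] ∨ cs = [1])) ∨ (p = 0 ∧ cs = [1]) := by
  simp [qbfSession, Finset.mem_union, Finset.mem_product, Finset.mem_Icc,
    Prod.ext_iff]
  tauto

lemma updEnv_single {C : Type} (ρ : ℕ → C) (k : ℕ) (c : C) (m : ℕ) :
    updEnv ρ [k] [c] m = if m = k then c else ρ m := by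
  unfold updEnv
  by_cases h : m = k
  · subst h; simp [List.lookup]
  · have hm : (m == k) = false := by simpa using h
    simp [List.lookup, hm, h]

lemma sat_trE (F : ℕ → List ℕ → ℕ) (R : ℕ → List ℕ → Bool) (n : ℕ)
    (v : ℕ → Bool) (ρ : ℕ → ℕ) (E : BExpr)
    (hv : ∀ x ∈ E.vars, ρ x = if v x then 1 else 0) :
    Sat F R [qbfSession n] 1 ρ (trE E) ↔ E.eval v = true := by
  induction E with
  | var x =>
      have hx := hv x (by simp [BExpr.vars])
      simp only [trE, Sat, Tm.eval, List.map, List.getD, BExpr.eval]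
      have hg : ((([qbfSession n] : History ℕ)[1-1]?).getD ∅ : Session ℕ) = qbfSession n := rfl
      rw [hg, mem_qbfSession]
      cases hvx : v x <;> simp [hvx] at hx <;> simp [hx, hvx]
  | and a b iha ihb =>
      simp only [trE, Sat, BExpr.eval, Bool.and_eq_true]
      rw [iha (fun x hx => hv x (by simp [BExpr.vars, hx])),
        ihb (fun x hx => hv x (by simp [BExpr.vars, hx]))]
  | or a b iha ihb =>
      simp only [trE, Sat, BExpr.eval, Bool.or_eq_true]
      rw [iha (fun x hx => hv x (by simp [BExpr.vars, hx])),
        ihb (fun x hx => hv x (by simp [BExpr.vars, hx]))]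
      tauto
  | not a iha =>
      simp only [trE, Sat, BExpr.eval, Bool.not_eq_true']
      rw [iha (fun x hx => hv x (by simp [BExpr.vars, hx]))]
      simp

lemma qbfTrue_cons_true (v : ℕ → Bool) (k : ℕ) (qs : List Bool) (E : BExpr) :
    QbfTrue v k (true :: qs) E =
      ∀ b : Bool, QbfTrue (fun m => if m = k then b else v m) (k + 1) qs E := rfl

lemma qbfTrue_cons_false (v : ℕ → Bool) (k : ℕ) (qs : List Bool) (E : BExpr) :
    QbfTrue v k (false :: qs) E =
      ∃ b : Bool, QbfTrue (fun m => if m = k then b else v m) (k + 1) qs E := rfl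

lemma sat_trQ (F : ℕ → List ℕ → ℕ) (R : ℕ → List ℕ → Bool) (n : ℕ) (E : BExpr) :
    ∀ (qs : List Bool) (k : ℕ) (v : ℕ → Bool) (ρ : ℕ → ℕ),
      1 ≤ k → k + qs.length ≤ n + 1 →
      (∀ x ∈ E.vars, x < k + qs.length) →
      (∀ x ∈ E.vars, x < k → ρ x = if v x then 1 else 0) →
      (QbfTrue v k qs E ↔ Sat F R [qbfSession n] 1 ρ (trQ k qs E)) := by
  intro qs
  induction qs with
  | nil =>
      intro k v ρ _ _ hlt hv
      simp only [QbfTrue, trQ]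
      rw [sat_trE F R n v ρ E (fun x hx => hv x hx (by simpa using hlt x hx))]
  | cons q qs ih =>
      intro k v ρ hk hkn hlt hv
      have hkn' : k ≤ n := by simp [List.length] at hkn; omega
      have hmem : ∀ cs : List ℕ,
          ((k, cs) ∈ ([qbfSession n] : History ℕ).getD (1-1) ∅ ↔
            cs = [0] ∨ cs = [1]) := by
        intro cs
        rw [show ([qbfSession n] : History ℕ).getD (1-1) ∅ = qbfSession n from rfl,
          mem_qbfSession]
        constructor
        · rintro (⟨_, _, h⟩ | ⟨h0, _⟩)
          · exact h
          · omega
        · intro h; exact Or.inl ⟨hk, hkn', h⟩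
      have key : ∀ (b : Bool) (c : ℕ), c = (if b then 1 else 0) →
          (QbfTrue (fun m => if m = k then b else v m) (k + 1) qs E ↔
           Sat F R [qbfSession n] 1 (updEnv ρ [k] [c]) (trQ (k + 1) qs E)) := by
        intro b c hc
        apply ih (k + 1) _ _ (by omega) (by simp at hkn ⊢; omega)
          (fun x hx => by have := hlt x hx; simp at this ⊢; omega)
        intro x hx hxk
        rw [updEnv_single]
        by_cases hxe : x = k
        · simp [hxe, hc]
        · have : x < k := by omega
          simp [hxe, hv x hx this]
      cases q with
      | true =>
          rw [qbfTrue_cons_true]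
          simp only [trQ, Sat, reduceIte]
          constructor
          · intro H cs hcs hmem'
            rcases (hmem cs).mp hmem' with h | h
            · subst h; exact (key false 0 rfl).mp (H false)
            · subst h; exact (key true 1 rfl).mp (H true)
          · intro H b
            cases b with
            | false => exact (key false 0 rfl).mpr (H [0] rfl ((hmem [0]).mpr (Or.inl rfl)))
            | true => exact (key true 1 rfl).mpr (H [1] rfl ((hmem [1]).mpr (Or.inr rfl)))
      | false =>
          rw [qbfTrue_cons_false]
          simp only [trQ, Sat, reduceIte]
          constructor
          · rintro ⟨b, hb⟩ H
            cases b with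
            | false =>
                exact H [0] rfl ((hmem [0]).mpr (Or.inl rfl)) ((key false 0 rfl).mp hb)
            | true =>
                exact H [1] rfl ((hmem [1]).mpr (Or.inr rfl)) ((key true 1 rfl).mp hb)
          · intro H
            by_contra Hc
            push_neg at Hc
            apply H
            intro cs hcs hmem'
            rcases (hmem cs).mp hmem' with h | h
            · subst h
              intro hs
              exact Hc false ((key false 0 rfl).mpr hs)
            · subst h
              intro hs
              exact Hc true ((key true 1 rfl).mpr hs)

theorem qbf_reduction (Q : List Bool) (E : BExpr)
    (hclosed : ∀ x ∈ E.vars, 1 ≤ x ∧ x ≤ Q.length)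
    (F : ℕ → List ℕ → ℕ) (R : ℕ → List ℕ → Bool) :
    (∀ v : ℕ → Bool, QbfTrue v 1 Q E) ↔
      (∀ ρ : ℕ → ℕ, Sat F R [qbfSession Q.length] 1 ρ (trQ 1 Q E)) := by
  have main : ∀ (v : ℕ → Bool) (ρ : ℕ → ℕ),
      QbfTrue v 1 Q E ↔ Sat F R [qbfSession Q.length] 1 ρ (trQ 1 Q E) := by
    intro v ρ
    apply sat_trQ F R Q.length E Q 1 v ρ le_rfl (by omega)
    · intro x hx; have := hclosed x hx; omega
    · intro x hx hx1; have := hclosed x hx; omega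
  constructor
  · intro H ρ
    exact (main (fun _ => false) ρ).mp (H _)
  · intro H v
    exact (main v (fun _ => 0)).mpr (H _)
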